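/- Let θ* > 0, let p_{θ*}(y) = (1/(2√(2π)))(e^{−(y−θ*)²/2} + e^{−(y+θ*)²/2}), let q(y;θ) = 1/(1 + e^{2yθ}), and define M₀(θ) = ∫_ℝ (1 − 2 q(y;θ)) y p_{θ*}(y) dy. Then M₀ is differentiable on ℝ with derivative M₀'(θ) = 4 ∫_ℝ y² / (e^{−yθ} + e^{yθ})² p_{θ*}(y) dy ≥ 0; in particular M₀ is monotone increasing. -/

import Mathlib

open MeasureTheory

/-- Gaussian moment integrability: `(1 + y²) e^{-(y-c)²/2}` is integrable. -/
lemma integrable_one_add_sq_mul_gauss (c : ℝ) :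
    Integrable (fun y : ℝ => (1 + y ^ 2) * Real.exp (-(y - c) ^ 2 / 2)) := by
  have hb : (0 : ℝ) < 1 / 2 := by norm_num
  have hgen : ∀ n : ℕ, Integrable (fun u : ℝ => u ^ n * Real.exp (-(1 / 2) * u ^ 2)) := by
    intro n
    have hs : (-1 : ℝ) < (n : ℝ) := by
      have : (0 : ℝ) ≤ (n : ℝ) := Nat.cast_nonneg n
      linarith
    have := integrable_rpow_mul_exp_neg_mul_sq hb hs
    simpa [Real.rpow_natCast] using this
  have h0 := hgen 0
  have h1 := hgen 1
  have h2 := hgen 2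
  have hcomb := ((h0.const_mul (1 + c ^ 2)).add (h1.const_mul (2 * c))).add h2
  have hmid : Integrable (fun u : ℝ => (1 + (u + c) ^ 2) * Real.exp (-u ^ 2 / 2)) := by
    refine hcomb.congr ?_
    filter_upwards with u
    simp only [Pi.add_apply]
    rw [show -(1 / 2 : ℝ) * u ^ 2 = -u ^ 2 / 2 by ring]
    ring
  have := hmid.comp_sub_right c
  refine this.congr ?_
  filter_upwards with y
  rw [show y - c + c = y by ring]

/-- Pointwise derivative computation. -/
lemma em_integrand_hasDerivAt (y pv θ : ℝ) :
    HasDerivAt (fun θ : ℝ => (1 - 2 * (1 / (1 + Real.exp (2 * y * θ)))) * y * pv)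
      (4 * (y ^ 2 / (Real.exp (-(y * θ)) + Real.exp (y * θ)) ^ 2 * pv)) θ := by
  have ht : HasDerivAt (fun θ : ℝ => 2 * y * θ) (2 * y) θ := by
    simpa using (hasDerivAt_id θ).const_mul (2 * y)
  have he : HasDerivAt (fun θ : ℝ => Real.exp (2 * y * θ))
      (Real.exp (2 * y * θ) * (2 * y)) θ := ht.exp
  have hd : (1 : ℝ) + Real.exp (2 * y * θ) ≠ 0 := by positivity
  have hinv : HasDerivAt (fun θ : ℝ => (1 + Real.exp (2 * y * θ))⁻¹)
      (-(Real.exp (2 * y * θ) * (2 * y)) / (1 + Real.exp (2 * y * θ)) ^ 2) θ :=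
    (he.const_add 1).inv hd
  have h1 : HasDerivAt (fun θ : ℝ => 1 - 2 * (1 + Real.exp (2 * y * θ))⁻¹)
      (-(2 * (-(Real.exp (2 * y * θ) * (2 * y)) / (1 + Real.exp (2 * y * θ)) ^ 2))) θ :=
    (hinv.const_mul 2).const_sub 1
  have hF := (h1.mul_const y).mul_const pv
  have harg : (fun θ : ℝ => (1 - 2 * (1 / (1 + Real.exp (2 * y * θ)))) * y * pv) =
      fun θ : ℝ => (1 - 2 * (1 + Real.exp (2 * y * θ))⁻¹) * y * pv := by
    funext θ; rw [one_div]
  rw [harg]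
  refine hF.congr_deriv ?_
  set t := Real.exp (y * θ) with htdef
  have ht0 : 0 < t := Real.exp_pos _
  have hneg : Real.exp (-(y * θ)) = t⁻¹ := Real.exp_neg _
  have h2t : Real.exp (2 * y * θ) = t ^ 2 := by
    rw [show 2 * y * θ = y * θ + y * θ by ring, Real.exp_add]; ring
  rw [hneg, h2t]
  have h1t : (1 : ℝ) + t ^ 2 ≠ 0 := by positivity
  have htne : t ≠ 0 := ne_of_gt ht0
  field_simp
  ring

/-- the unsupervised population EM map `M₀` of the symmetric
two-component Gaussian mixture is differentiable with the stated nonnegative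
derivative; in particular it is monotone increasing. -/
theorem symmetric_gaussian_mixture_em_map_derivative_and_monotone
    (θstar : ℝ) (hθstar : 0 < θstar)
    (p : ℝ → ℝ)
    (hp : p = fun y => (1 / (2 * Real.sqrt (2 * Real.pi))) *
      (Real.exp (-(y - θstar) ^ 2 / 2) + Real.exp (-(y + θstar) ^ 2 / 2)))
    (q : ℝ → ℝ → ℝ)
    (hq : q = fun θ y => 1 / (1 + Real.exp (2 * y * θ)))
    (M0 : ℝ → ℝ)
    (hM0 : M0 = fun θ => ∫ y : ℝ, (1 - 2 * q θ y) * y * p y)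
    (D : ℝ → ℝ)
    (hD : D = fun θ => 4 * ∫ y : ℝ,
      y ^ 2 / (Real.exp (-(y * θ)) + Real.exp (y * θ)) ^ 2 * p y) :
    (∀ θ : ℝ, HasDerivAt M0 (D θ) θ ∧ 0 ≤ D θ) ∧ Monotone M0 := by
  -- basic facts about p
  have hp_nonneg : ∀ y, 0 ≤ p y := by
    intro y; rw [hp]; positivity
  have hp_meas : Measurable p := by
    rw [hp]; fun_prop
  -- the dominating function
  have hG : Integrable (fun y : ℝ => (1 + y ^ 2) * p y) := by
    rw [hp]
    have hfun : (fun y : ℝ => (1 + y ^ 2) * ((1 / (2 * Real.sqrt (2 * Real.pi))) *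
          (Real.exp (-(y - θstar) ^ 2 / 2) + Real.exp (-(y + θstar) ^ 2 / 2)))) =
        fun y : ℝ => (1 / (2 * Real.sqrt (2 * Real.pi))) *
            ((1 + y ^ 2) * Real.exp (-(y - θstar) ^ 2 / 2)) +
          (1 / (2 * Real.sqrt (2 * Real.pi))) *
            ((1 + y ^ 2) * Real.exp (-(y - -θstar) ^ 2 / 2)) := by
      funext y
      rw [show y - -θstar = y + θstar by ring]
      ring
    rw [hfun]
    exact ((integrable_one_add_sq_mul_gauss θstar).const_mul _).add
      ((integrable_one_add_sq_mul_gauss (-θstar)).const_mul _)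
  -- define F and F'
  set F : ℝ → ℝ → ℝ := fun θ y => (1 - 2 * (1 / (1 + Real.exp (2 * y * θ)))) * y * p y
    with hF
  set F' : ℝ → ℝ → ℝ :=
    fun θ y => 4 * (y ^ 2 / (Real.exp (-(y * θ)) + Real.exp (y * θ)) ^ 2 * p y) with hF'
  have key : ∀ θ : ℝ, HasDerivAt (fun θ => ∫ y : ℝ, F θ y) (∫ y : ℝ, F' θ y) θ := by
    intro θ
    have hmeasF : ∀ x : ℝ, AEStronglyMeasurable (F x) volume := by
      intro x
      apply Measurable.aestronglyMeasurable
      rw [hF]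
      fun_prop
    have hmeasF' : AEStronglyMeasurable (F' θ) volume := by
      apply Measurable.aestronglyMeasurable
      rw [hF']
      fun_prop
    have hFint : Integrable (F θ) volume := by
      refine hG.mono (hmeasF θ) ?_
      filter_upwards with y
      rw [hF]
      simp only [Real.norm_eq_abs]
      have he : (0 : ℝ) < Real.exp (2 * y * θ) := Real.exp_pos _
      have hq1 : |1 - 2 * (1 / (1 + Real.exp (2 * y * θ)))| ≤ 1 := by
        have he1 : (0 : ℝ) < 1 + Real.exp (2 * y * θ) := by positivity
        have hle : 1 / (1 + Real.exp (2 * y * θ)) ≤ 1 := by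
          rw [div_le_one he1]; linarith
        have hge : (0 : ℝ) ≤ 1 / (1 + Real.exp (2 * y * θ)) := by positivity
        rw [abs_le]; constructor <;> linarith
      calc |(1 - 2 * (1 / (1 + Real.exp (2 * y * θ)))) * y * p y|
          = |1 - 2 * (1 / (1 + Real.exp (2 * y * θ)))| * |y| * p y := by
            rw [abs_mul, abs_mul, abs_of_nonneg (hp_nonneg y)]
        _ ≤ 1 * |y| * p y := by
            apply mul_le_mul_of_nonneg_right _ (hp_nonneg y)
            exact mul_le_mul_of_nonneg_right hq1 (abs_nonneg y)
        _ ≤ |(1 + y ^ 2) * p y| := by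
            rw [abs_mul, abs_of_nonneg (hp_nonneg y),
              abs_of_nonneg (by positivity : (0:ℝ) ≤ 1 + y ^ 2)]
            apply mul_le_mul_of_nonneg_right _ (hp_nonneg y)
            nlinarith [sq_abs y, sq_nonneg (|y| - 1)]
    have hbound : ∀ᵐ y : ℝ, ∀ x ∈ Metric.ball θ 1, ‖F' x y‖ ≤ (1 + y ^ 2) * p y := by
      filter_upwards with y
      intro x _
      rw [hF']
      simp only [Real.norm_eq_abs]
      have h1 : (0 : ℝ) < Real.exp (-(y * x)) := Real.exp_pos _
      have h2 : (0 : ℝ) < Real.exp (y * x) := Real.exp_pos _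
      have hprod : Real.exp (-(y * x)) * Real.exp (y * x) = 1 := by
        rw [← Real.exp_add]; simp
      have hden : (4 : ℝ) ≤ (Real.exp (-(y * x)) + Real.exp (y * x)) ^ 2 := by
        nlinarith [sq_nonneg (Real.exp (-(y * x)) - Real.exp (y * x))]
      have hfrac : 4 * (y ^ 2 / (Real.exp (-(y * x)) + Real.exp (y * x)) ^ 2) ≤ y ^ 2 := by
        have hd0 : (0 : ℝ) < (Real.exp (-(y * x)) + Real.exp (y * x)) ^ 2 := by positivity
        rw [show 4 * (y ^ 2 / (Real.exp (-(y * x)) + Real.exp (y * x)) ^ 2) =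
          y ^ 2 * 4 / (Real.exp (-(y * x)) + Real.exp (y * x)) ^ 2 from by ring,
          div_le_iff₀ hd0]
        nlinarith [sq_nonneg y]
      have hnn : (0 : ℝ) ≤ 4 * (y ^ 2 / (Real.exp (-(y * x)) + Real.exp (y * x)) ^ 2 * p y) := by
        have := hp_nonneg y; positivity
      rw [abs_of_nonneg hnn]
      calc 4 * (y ^ 2 / (Real.exp (-(y * x)) + Real.exp (y * x)) ^ 2 * p y)
          = (4 * (y ^ 2 / (Real.exp (-(y * x)) + Real.exp (y * x)) ^ 2)) * p y := by ring
        _ ≤ y ^ 2 * p y := mul_le_mul_of_nonneg_right hfrac (hp_nonneg y)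
        _ ≤ (1 + y ^ 2) * p y := by nlinarith [hp_nonneg y]
    have hdiff : ∀ᵐ y : ℝ, ∀ x ∈ Metric.ball θ 1, HasDerivAt (fun x => F x y) (F' x y) x := by
      filter_upwards with y
      intro x _
      rw [hF, hF']
      exact em_integrand_hasDerivAt y (p y) x
    exact (hasDerivAt_integral_of_dominated_loc_of_deriv_le (Metric.ball_mem_nhds θ one_pos)
      (Filter.Eventually.of_forall hmeasF) hFint hmeasF' hbound hG hdiff).2
  -- identify M0 and D with the integrals of F and F'
  have hM0F : M0 = fun θ => ∫ y : ℝ, F θ y := by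
    rw [hM0, hq, hF]
  have hDF : ∀ θ : ℝ, D θ = ∫ y : ℝ, F' θ y := by
    intro θ
    rw [hD, hF']
    rw [integral_const_mul]
  have hmain : ∀ θ : ℝ, HasDerivAt M0 (D θ) θ := by
    intro θ
    rw [hM0F, hDF θ]
    exact key θ
  have hDnn : ∀ θ : ℝ, 0 ≤ D θ := by
    intro θ
    rw [hD]
    have : 0 ≤ ∫ y : ℝ, y ^ 2 / (Real.exp (-(y * θ)) + Real.exp (y * θ)) ^ 2 * p y := by
      apply integral_nonneg
      intro y
      have := hp_nonneg y
      positivity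
    linarith
  refine ⟨fun θ => ⟨hmain θ, hDnn θ⟩, ?_⟩
  apply monotone_of_deriv_nonneg
  · exact fun θ => (hmain θ).differentiableAt
  · intro θ
    rw [(hmain θ).deriv]
    exact hDnn θ
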